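/- The set of correlated profiles with no undetectable beneficial deviations (for a fixed finite game and SIS partition) is a nonempty, compact, convex polytope in the simplex over R × C; hence there exists a SESLO, i.e., a correlated profile with no undetectable beneficial deviations maximizing the row player's expected utility. -/

import Mathlib

open Finset

theorem minimax_alt {X Y : Type*} [Fintype X] [Fintype Y] [Nonempty X] (f : X → Y → ℝ) :
    (∃ p ∈ stdSimplex ℝ X, ∀ y, 0 ≤ ∑ x, p x * f x y) ∨
    (∃ q ∈ stdSimplex ℝ Y, ∀ x, ∑ y, q y * f x y < 0) := by
  classical
  set L : (X → ℝ) →ₗ[ℝ] (Y → ℝ) :=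
    { toFun := fun p y => ∑ x, p x * f x y
      map_add' := by intro p p'; funext y; simp [add_mul, Finset.sum_add_distrib]
      map_smul' := by intro a p; funext y; simp [Finset.mul_sum, mul_assoc] } with hL
  set Z : Set (Y → ℝ) := L '' stdSimplex ℝ X with hZ
  set O : Set (Y → ℝ) := {g | ∀ y, 0 ≤ g y} with hO
  by_cases hne : (Z ∩ O).Nonempty
  · obtain ⟨z, ⟨p, hp, rfl⟩, hzO⟩ := hne
    exact Or.inl ⟨p, hp, hzO⟩
  right
  have hdisj : Disjoint Z O :=
    Set.disjoint_iff_inter_eq_empty.mpr (Set.not_nonempty_iff_eq_empty.mp hne)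
  have hLcont : Continuous L := by
    simp only [hL]
    exact continuous_pi fun y => continuous_finset_sum _ fun x _ =>
      (continuous_apply x).mul continuous_const
  have hZcomp : IsCompact Z := (isCompact_stdSimplex ℝ X).image hLcont
  have hZconv : Convex ℝ Z := (convex_stdSimplex ℝ X).linear_image L
  have hOconv : Convex ℝ O := by
    intro g hg g' hg' a b ha hb hab y
    have := hg y
    have := hg' y
    simp only [Pi.add_apply, Pi.smul_apply, smul_eq_mul]
    positivity
  have hOclosed : IsClosed O := by
    have : O = ⋂ y, {g : Y → ℝ | 0 ≤ g y} := by ext g; simp [hO]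
    rw [this]
    exact isClosed_iInter fun y => isClosed_le continuous_const (continuous_apply y)
  obtain ⟨φ, u, v, hZu, huv, hOv⟩ :=
    geometric_hahn_banach_compact_closed hZconv hZcomp hOconv hOclosed hdisj
  have hv0 : v < 0 := by
    have := hOv 0 (fun y => le_refl 0)
    simpa using this
  have hφO : ∀ b ∈ O, 0 ≤ φ b := by
    intro b hb
    by_contra h
    push_neg at h
    have ht : 0 < v / φ b := div_pos_of_neg_of_neg hv0 h
    have hmem : (v / φ b) • b ∈ O := fun y => by
      have := hb y
      simp only [Pi.smul_apply, smul_eq_mul]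
      positivity
    have := hOv _ hmem
    rw [map_smul, smul_eq_mul, div_mul_cancel₀ _ (ne_of_lt h)] at this
    exact lt_irrefl v this
  set w : Y → ℝ := fun y => φ (Pi.single y 1) with hw
  have hwnn : ∀ y, 0 ≤ w y := fun y =>
    hφO _ (fun y' => by
      rcases eq_or_ne y' y with h | h <;> simp [Pi.single_apply, h])
  have hφeq : ∀ g : Y → ℝ, φ g = ∑ y, g y * w y := by
    intro g
    have hg : g = ∑ y, g y • (Pi.single y (1:ℝ) : Y → ℝ) := by
      funext y'
      simp [Pi.single_apply, Finset.sum_ite_eq, mul_ite]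
    conv_lhs => rw [hg]
    rw [map_sum]
    simp [smul_eq_mul]
    rfl
  have hx : ∀ x, ∑ y, f x y * w y < 0 := by
    intro x
    have hmem : Pi.single x (1:ℝ) ∈ stdSimplex ℝ X := single_mem_stdSimplex ℝ x
    have hz : L (Pi.single x 1) ∈ Z := Set.mem_image_of_mem _ hmem
    have h1 := hZu _ hz
    have h2 : L (Pi.single x (1:ℝ)) = f x := by
      funext y
      simp [hL, Pi.single_apply, Finset.sum_ite_eq, ite_mul]
    rw [h2, hφeq] at h1
    calc ∑ y, f x y * w y < u := h1
      _ < v := huv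
      _ < 0 := hv0
  set W := ∑ y, w y with hW
  have hWnn : 0 ≤ W := Finset.sum_nonneg fun y _ => hwnn y
  have hWpos : 0 < W := by
    rcases hWnn.lt_or_eq with h | h
    · exact h
    · exfalso
      obtain ⟨x⟩ := ‹Nonempty X›
      have hz : ∀ y ∈ Finset.univ, w y = 0 :=
        (Finset.sum_eq_zero_iff_of_nonneg fun y _ => hwnn y).mp h.symm
      have := hx x
      rw [Finset.sum_congr rfl (fun y _ => by rw [hz y (Finset.mem_univ y), mul_zero])] at this
      simpa using this
  refine ⟨fun y => w y / W, ⟨fun y => div_nonneg (hwnn y) hWnn, ?_⟩, ?_⟩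
  · rw [← Finset.sum_div, div_self (ne_of_gt hWpos)]
  · intro x
    have : ∑ y, w y / W * f x y = (∑ y, f x y * w y) / W := by
      rw [Finset.sum_div]
      exact Finset.sum_congr rfl fun y _ => by ring
    rw [this]
    exact div_neg_of_neg_of_pos (hx x) hWpos

theorem stationary_exists {R : Type*} [Fintype R] [Nonempty R] (Q : R → R → ℝ)
    (hQ0 : ∀ r s, 0 ≤ Q r s) (hQ1 : ∀ r, ∑ s, Q r s = 1) :
    ∃ p ∈ stdSimplex ℝ R, ∀ s, ∑ r, p r * Q r s = p s := by
  classical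
  rcases minimax_alt (fun r s => Q r s - if r = s then 1 else 0) with ⟨p, hp, hineq⟩ | ⟨q, hq, hneg⟩
  · refine ⟨p, hp, ?_⟩
    have key : ∀ s, 0 ≤ ∑ r, p r * Q r s - p s := by
      intro s
      have := hineq s
      have h2 : ∑ r, p r * (Q r s - if r = s then 1 else 0)
          = ∑ r, p r * Q r s - p s := by
        rw [Finset.sum_congr rfl (fun r _ => mul_sub (p r) _ _), Finset.sum_sub_distrib]
        congr 1
        simp [mul_ite, Finset.sum_ite_eq']
      linarith [h2 ▸ this]
    have hsum0 : ∑ s, (∑ r, p r * Q r s - p s) = 0 := by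
      rw [Finset.sum_sub_distrib, Finset.sum_comm]
      have : ∀ r, ∑ s, p r * Q r s = p r := by
        intro r; rw [← Finset.mul_sum, hQ1 r, mul_one]
      rw [Finset.sum_congr rfl fun r _ => this r, hp.2]
      ring
    intro s
    have := (Finset.sum_eq_zero_iff_of_nonneg (fun s _ => key s)).mp hsum0 s (Finset.mem_univ s)
    linarith
  · exfalso
    obtain ⟨s0, _, hs0⟩ := Finset.exists_min_image Finset.univ q Finset.univ_nonempty
    have := hneg s0
    have hge : q s0 ≤ ∑ s, q s * (Q s0 s - if s0 = s then 1 else 0) + q s0 := by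
      have h2 : ∑ s, q s * (Q s0 s - if s0 = s then 1 else 0)
          = ∑ s, q s * Q s0 s - q s0 := by
        rw [Finset.sum_congr rfl (fun s _ => mul_sub (q s) _ _), Finset.sum_sub_distrib]
        congr 1
        simp [mul_ite, Finset.sum_ite_eq]
      rw [h2]
      have : q s0 = ∑ s, q s0 * Q s0 s := by rw [← Finset.mul_sum, hQ1 s0, mul_one]
      have hle : ∑ s, q s0 * Q s0 s ≤ ∑ s, q s * Q s0 s :=
        Finset.sum_le_sum fun s _ => mul_le_mul_of_nonneg_right (hs0 s (Finset.mem_univ s)) (hQ0 s0 s)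
      linarith
    linarith

/-- flow-stationary distribution for an arbitrary nonnegative kernel -/
theorem flow_stationary_exists {R : Type*} [Fintype R] [Nonempty R] (α : R → R → ℝ)
    (hα : ∀ r s, 0 ≤ α r s) :
    ∃ p ∈ stdSimplex ℝ R, ∀ s, ∑ r, p r * α r s = p s * ∑ t, α s t := by
  classical
  set M : ℝ := (∑ r, ∑ s, α r s) + 1 with hM
  have hMpos : 0 < M := by
    have : 0 ≤ ∑ r, ∑ s, α r s :=
      Finset.sum_nonneg fun r _ => Finset.sum_nonneg fun s _ => hα r s
    linarith
  have ha_le : ∀ r, ∑ t, α r t ≤ M - 1 := by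
    intro r
    have : ∑ t, α r t ≤ ∑ r, ∑ s, α r s :=
      Finset.single_le_sum (f := fun r => ∑ t, α r t)
        (fun r _ => Finset.sum_nonneg fun s _ => hα r s) (Finset.mem_univ r)
    linarith
  set Q : R → R → ℝ := fun r s => α r s / M + (if r = s then 1 - (∑ t, α r t) / M else 0) with hQdef
  have hQ0 : ∀ r s, 0 ≤ Q r s := by
    intro r s
    rcases eq_or_ne r s with h | h
    · subst h
      have key : 0 ≤ 1 - (∑ t, α r t) / M := by
        rw [sub_nonneg, div_le_one hMpos]; linarith [ha_le r]
      have h3 : 0 ≤ α r r / M := div_nonneg (hα r r) hMpos.le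
      simp only [hQdef, if_true]
      linarith
    · simp only [hQdef, if_neg h, add_zero]
      exact div_nonneg (hα r s) hMpos.le
  have hQ1 : ∀ r, ∑ s, Q r s = 1 := by
    intro r
    simp only [hQdef]
    rw [Finset.sum_add_distrib, ← Finset.sum_div, Finset.sum_ite_eq]
    simp
  obtain ⟨p, hp, hstat⟩ := stationary_exists Q hQ0 hQ1
  refine ⟨p, hp, ?_⟩
  intro s
  have := hstat s
  have hexp : ∑ r, p r * Q r s
      = (∑ r, p r * α r s) / M + p s * (1 - (∑ t, α s t) / M) := by
    simp only [hQdef]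
    rw [Finset.sum_congr rfl (fun r _ => by rw [mul_add] : ∀ r ∈ Finset.univ,
      p r * (α r s / M + (if r = s then 1 - (∑ t, α r t) / M else 0))
        = p r * (α r s / M) + p r * (if r = s then 1 - (∑ t, α r t) / M else 0)),
      Finset.sum_add_distrib]
    congr 1
    · rw [Finset.sum_div]
      exact Finset.sum_congr rfl fun r _ => by ring
    · simp [mul_ite, Finset.sum_ite_eq']
  rw [hexp] at this
  have : (∑ r, p r * α r s) / M = p s * ((∑ t, α s t) / M) := by linarith [this]
  field_simp at this
  linarith [this]

theorem exists_pos_of_simplex {Z : Type*} [Fintype Z] (w : Z → ℝ) (hw0 : ∀ z, 0 ≤ w z)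
    (hw1 : ∑ z, w z = 1) : ∃ z, 0 < w z := by
  by_contra h
  push_neg at h
  have : ∑ z, w z = 0 := Finset.sum_eq_zero fun z _ => le_antisymm (h z) (hw0 z)
  rw [hw1] at this
  norm_num at this

theorem K_nonempty
    {R C ι : Type*} [Fintype R] [Fintype C] [Nonempty R] [Nonempty C]
    (u1 u2 : R → C → ℝ) (sis : R → ι) :
    ∃ σ : R → C → ℝ, (∀ r c, 0 ≤ σ r c) ∧ (∑ r, ∑ c, σ r c) = 1 ∧
        (∀ c c', 0 ≤ ∑ r, σ r c * (u2 r c - u2 r c')) ∧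
        (∀ r r', sis r = sis r' → 0 ≤ ∑ c, σ r c * (u1 r c - u1 r' c)) := by
  classical
  set f : (R × C) → ((C × C) ⊕ (R × R)) → ℝ := fun x d =>
    match d with
    | Sum.inl (c1, c2) => if x.2 = c1 then u2 x.1 c1 - u2 x.1 c2 else 0
    | Sum.inr (r1, r2) => if x.1 = r1 ∧ sis r1 = sis r2 then u1 r1 x.2 - u1 r2 x.2 else 0
    with hf
  rcases minimax_alt f with ⟨p, ⟨hp0, hp1⟩, hineq⟩ | ⟨q, ⟨hq0, hq1⟩, hneg⟩
  · refine ⟨fun r c => p (r, c), fun r c => hp0 (r, c), ?_, ?_, ?_⟩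
    · rw [← Fintype.sum_prod_type]; exact hp1
    · intro c c'
      have h := hineq (Sum.inl (c, c'))
      rw [Fintype.sum_prod_type] at h
      simpa [hf, mul_ite, Finset.sum_ite_eq'] using h
    · intro r r' hsis
      have h := hineq (Sum.inr (r, r'))
      rw [Fintype.sum_prod_type_right] at h
      simpa [hf, hsis, mul_ite, Finset.sum_ite_eq'] using h
  · exfalso
    set β : C → C → ℝ := fun c1 c2 => q (Sum.inl (c1, c2)) with hβ
    set α : R → R → ℝ := fun r1 r2 =>
      if sis r1 = sis r2 then q (Sum.inr (r1, r2)) else 0 with hα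
    obtain ⟨p2, ⟨hp20, hp21⟩, hp2stat⟩ :=
      flow_stationary_exists β (fun c1 c2 => hq0 _)
    obtain ⟨p, ⟨hp0, hp1⟩, hpstat⟩ :=
      flow_stationary_exists α (fun r1 r2 => by
        simp only [hα]; split <;> [exact hq0 _; exact le_refl 0])
    -- the value at each pure pair splits into column part + row part
    have hsplit : ∀ r c, ∑ d, q d * f (r, c) d
        = (∑ c2, β c c2 * (u2 r c - u2 r c2)) + ∑ r2, α r r2 * (u1 r c - u1 r2 c) := by
      intro r c
      rw [Fintype.sum_sum_type]
      congr 1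
      · rw [Fintype.sum_prod_type]
        rw [Finset.sum_comm]
        simp only [hf, hβ, mul_ite, mul_zero]
        rw [Finset.sum_congr rfl fun c2 _ => Finset.sum_ite_eq Finset.univ c
          (fun c1 => q (Sum.inl (c1, c2)) * (u2 r c1 - u2 r c2))]
        simp
      · rw [Fintype.sum_prod_type]
        have step : ∀ r1, (∑ r2, q (Sum.inr (r1, r2)) *
              if r = r1 ∧ sis r1 = sis r2 then u1 r1 c - u1 r2 c else 0)
            = if r = r1 then (∑ r2, α r1 r2 * (u1 r1 c - u1 r2 c)) else 0 := by
          intro r1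
          split
          · next h =>
            subst h
            simp [hα, mul_ite, ite_mul, mul_zero, zero_mul]
          · next h =>
            simp [h]
        calc ∑ r1, ∑ r2, q (Sum.inr (r1, r2)) * f (r, c) (Sum.inr (r1, r2))
            = ∑ r1, (if r = r1 then (∑ r2, α r1 r2 * (u1 r1 c - u1 r2 c)) else 0) := by
              refine Finset.sum_congr rfl fun r1 _ => ?_
              rw [← step r1]
          _ = ∑ r2, α r r2 * (u1 r c - u1 r2 c) := by
              rw [Finset.sum_ite_eq]
              simp
    -- column part vanishes under the stationary distribution p2
    have hA : ∀ r, ∑ c, ∑ c2, (p2 c * β c c2) * (u2 r c - u2 r c2) = 0 := by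
      intro r
      simp only [mul_sub, Finset.sum_sub_distrib]
      rw [sub_eq_zero]
      have L1 : ∑ c, ∑ c2, p2 c * β c c2 * u2 r c
          = ∑ c, (p2 c * ∑ c2, β c c2) * u2 r c :=
        Finset.sum_congr rfl fun c _ => by
          rw [← Finset.sum_mul, ← Finset.mul_sum]
      have L2 : ∑ c, ∑ c2, p2 c * β c c2 * u2 r c2
          = ∑ c2, (p2 c2 * ∑ t, β c2 t) * u2 r c2 := by
        rw [Finset.sum_comm]
        refine Finset.sum_congr rfl fun c2 _ => ?_
        rw [← Finset.sum_mul, hp2stat c2]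
      rw [L1, L2]
    -- row part vanishes under the stationary distribution p
    have hB : ∀ c, ∑ r, ∑ r2, (p r * α r r2) * (u1 r c - u1 r2 c) = 0 := by
      intro c
      simp only [mul_sub, Finset.sum_sub_distrib]
      rw [sub_eq_zero]
      have L1 : ∑ r, ∑ r2, p r * α r r2 * u1 r c
          = ∑ r, (p r * ∑ r2, α r r2) * u1 r c :=
        Finset.sum_congr rfl fun r _ => by
          rw [← Finset.sum_mul, ← Finset.mul_sum]
      have L2 : ∑ r, ∑ r2, p r * α r r2 * u1 r2 c
          = ∑ r2, (p r2 * ∑ t, α r2 t) * u1 r2 c := by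
        rw [Finset.sum_comm]
        refine Finset.sum_congr rfl fun r2 _ => ?_
        rw [← Finset.sum_mul, hpstat r2]
      rw [L1, L2]
    -- the grand average is zero
    have hS0 : ∑ x : R × C, (p x.1 * p2 x.2) * (∑ d, q d * f x d) = 0 := by
      rw [Fintype.sum_prod_type]
      have : ∀ r c, (p r * p2 c) * (∑ d, q d * f (r, c) d)
          = p r * (∑ c2, (p2 c * β c c2) * (u2 r c - u2 r c2))
            + p2 c * (∑ r2, (p r * α r r2) * (u1 r c - u1 r2 c)) := by
        intro r c
        rw [hsplit r c, mul_add, Finset.mul_sum, Finset.mul_sum, Finset.mul_sum, Finset.mul_sum]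
        congr 1
        · exact Finset.sum_congr rfl fun c2 _ => by ring
        · exact Finset.sum_congr rfl fun r2 _ => by ring
      rw [Finset.sum_congr rfl fun r _ => Finset.sum_congr rfl fun c _ => this r c]
      simp only [Finset.sum_add_distrib]
      have e1 : ∑ r, ∑ c, p r * (∑ c2, (p2 c * β c c2) * (u2 r c - u2 r c2)) = 0 :=
        Finset.sum_eq_zero fun r _ => by rw [← Finset.mul_sum, hA r, mul_zero]
      have e2 : ∑ r, ∑ c, p2 c * (∑ r2, (p r * α r r2) * (u1 r c - u1 r2 c)) = 0 := by
        rw [Finset.sum_comm]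
        exact Finset.sum_eq_zero fun c _ => by rw [← Finset.mul_sum, hB c, mul_zero]
      rw [e1, e2, add_zero]
    -- but it is strictly negative
    obtain ⟨r0, hr0⟩ := exists_pos_of_simplex p hp0 hp1
    obtain ⟨c0, hc0⟩ := exists_pos_of_simplex p2 hp20 hp21
    have hSneg : ∑ x : R × C, (p x.1 * p2 x.2) * (∑ d, q d * f x d) < 0 := by
      have := Finset.sum_lt_sum (s := (Finset.univ : Finset (R × C)))
        (f := fun x => (p x.1 * p2 x.2) * (∑ d, q d * f x d)) (g := fun _ => (0:ℝ))
        (fun x _ => mul_nonpos_of_nonneg_of_nonpos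
          (mul_nonneg (hp0 x.1) (hp20 x.2)) (hneg x).le)
        ⟨(r0, c0), Finset.mem_univ _,
          mul_neg_of_pos_of_neg (mul_pos hr0 hc0) (hneg (r0, c0))⟩
      simpa using this
    linarith

/-- for a fixed finite game and SIS partition, the set of
correlated profiles with no undetectable beneficial deviations is a nonempty,
compact, convex subset of the simplex over R × C (a polytope, being cut out by
finitely many linear inequalities); hence a SESLO exists, i.e. a correlated
profile with no undetectable beneficial deviations maximizing the row player's
expected utility. -/
theorem SESLO_exists
    {R C ι : Type*} [Fintype R] [Fintype C] [Nonempty R] [Nonempty C]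
    (u1 u2 : R → C → ℝ) (sis : R → ι) :
    let K : Set (R → C → ℝ) :=
      {σ | (∀ r c, 0 ≤ σ r c) ∧ (∑ r, ∑ c, σ r c) = 1 ∧
        (∀ c c', 0 ≤ ∑ r, σ r c * (u2 r c - u2 r c')) ∧
        (∀ r r', sis r = sis r' → 0 ≤ ∑ c, σ r c * (u1 r c - u1 r' c))}
    K.Nonempty ∧ Convex ℝ K ∧ IsCompact K ∧
      ∃ σ ∈ K, ∀ σ' ∈ K,
        ∑ r, ∑ c, σ' r c * u1 r c ≤ ∑ r, ∑ c, σ r c * u1 r c := by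
  intro K
  classical
  have hev : ∀ (r : R) (c : C), Continuous fun σ : R → C → ℝ => σ r c :=
    fun r c => (continuous_apply c).comp (continuous_apply r)
  have hKne : K.Nonempty := K_nonempty u1 u2 sis
  have hconv : Convex ℝ K := by
    rintro σ1 ⟨h1a, h1b, h1c, h1d⟩ σ2 ⟨h2a, h2b, h2c, h2d⟩ a b ha hb hab
    have happ : ∀ r c, (a • σ1 + b • σ2) r c = a * σ1 r c + b * σ2 r c := by
      intro r c; simp
    refine ⟨?_, ?_, ?_, ?_⟩
    · intro r c
      rw [happ]
      have := h1a r c; have := h2a r c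
      positivity
    · rw [Finset.sum_congr rfl fun r _ => Finset.sum_congr rfl fun c _ => happ r c]
      simp only [Finset.sum_add_distrib, ← Finset.mul_sum]
      rw [h1b, h2b]
      linarith
    · intro c c'
      have key : ∑ r, (a • σ1 + b • σ2) r c * (u2 r c - u2 r c')
          = a * (∑ r, σ1 r c * (u2 r c - u2 r c'))
            + b * (∑ r, σ2 r c * (u2 r c - u2 r c')) := by
        rw [Finset.mul_sum, Finset.mul_sum, ← Finset.sum_add_distrib]
        refine Finset.sum_congr rfl fun r _ => ?_
        rw [happ]; ring
      rw [key]
      have := h1c c c'; have := h2c c c'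
      positivity
    · intro r r' hsis
      have key : ∑ c, (a • σ1 + b • σ2) r c * (u1 r c - u1 r' c)
          = a * (∑ c, σ1 r c * (u1 r c - u1 r' c))
            + b * (∑ c, σ2 r c * (u1 r c - u1 r' c)) := by
        rw [Finset.mul_sum, Finset.mul_sum, ← Finset.sum_add_distrib]
        refine Finset.sum_congr rfl fun c _ => ?_
        rw [happ]; ring
      rw [key]
      have := h1d r r' hsis; have := h2d r r' hsis
      positivity
  have hcl : IsClosed K := by
    have hKeq : K = (⋂ r, ⋂ c, {σ : R → C → ℝ | 0 ≤ σ r c})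
        ∩ {σ : R → C → ℝ | ∑ r, ∑ c, σ r c = 1}
        ∩ (⋂ c, ⋂ c', {σ : R → C → ℝ | 0 ≤ ∑ r, σ r c * (u2 r c - u2 r c')})
        ∩ (⋂ r, ⋂ r', {σ : R → C → ℝ |
            sis r = sis r' → 0 ≤ ∑ c, σ r c * (u1 r c - u1 r' c)}) := by
      ext σ
      simp only [Set.mem_inter_iff, Set.mem_iInter, Set.mem_setOf_eq, K]
      tauto
    rw [hKeq]
    refine ((IsClosed.inter (IsClosed.inter ?_ ?_) ?_).inter ?_)
    · exact isClosed_iInter fun r => isClosed_iInter fun c =>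
        isClosed_le continuous_const (hev r c)
    · exact isClosed_eq (continuous_finset_sum _ fun r _ =>
        continuous_finset_sum _ fun c _ => hev r c) continuous_const
    · exact isClosed_iInter fun c => isClosed_iInter fun c' =>
        isClosed_le continuous_const (continuous_finset_sum _ fun r _ =>
          (hev r c).mul continuous_const)
    · refine isClosed_iInter fun r => isClosed_iInter fun r' => ?_
      by_cases h : sis r = sis r'
      · have : {σ : R → C → ℝ | sis r = sis r' → 0 ≤ ∑ c, σ r c * (u1 r c - u1 r' c)}
            = {σ : R → C → ℝ | 0 ≤ ∑ c, σ r c * (u1 r c - u1 r' c)} := by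
          ext σ; simp [h]
        rw [this]
        exact isClosed_le continuous_const (continuous_finset_sum _ fun c _ =>
          (hev r c).mul continuous_const)
      · have : {σ : R → C → ℝ | sis r = sis r' → 0 ≤ ∑ c, σ r c * (u1 r c - u1 r' c)}
            = Set.univ := by
          ext σ; simp [h]
        rw [this]
        exact isClosed_univ
  have hbd : Bornology.IsBounded K := by
    refine (Metric.isBounded_closedBall (x := (0 : R → C → ℝ)) (r := 1)).subset ?_
    intro σ hσ
    rw [Metric.mem_closedBall, dist_zero_right]
    rw [pi_norm_le_iff_of_nonneg zero_le_one]
    intro r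
    rw [pi_norm_le_iff_of_nonneg zero_le_one]
    intro c
    rw [Real.norm_eq_abs, abs_le]
    have h1 : σ r c ≤ ∑ c', σ r c' :=
      Finset.single_le_sum (fun c' _ => hσ.1 r c') (Finset.mem_univ c)
    have h2 : ∑ c', σ r c' ≤ ∑ r', ∑ c', σ r' c' :=
      Finset.single_le_sum (f := fun r' => ∑ c', σ r' c')
        (fun r' _ => Finset.sum_nonneg fun c' _ => hσ.1 r' c') (Finset.mem_univ r)
    have h3 := hσ.2.1
    constructor
    · linarith [hσ.1 r c]
    · linarith
  have hcomp : IsCompact K := Metric.isCompact_of_isClosed_isBounded hcl hbd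
  refine ⟨hKne, hconv, hcomp, ?_⟩
  have hcont : Continuous fun σ : R → C → ℝ => ∑ r, ∑ c, σ r c * u1 r c :=
    continuous_finset_sum _ fun r _ => continuous_finset_sum _ fun c _ =>
      (hev r c).mul continuous_const
  obtain ⟨σ, hσK, hmax⟩ := hcomp.exists_isMaxOn hKne hcont.continuousOn
  exact ⟨σ, hσK, fun σ' hσ' => hmax hσ'⟩
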